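/- Let d ≥ 1, n ≥ 0, and ℓ ≥ n, and set t = ℓ − n. Define B(ℓ, m) for m ≥ 0 by B(n, n) = d^n, B(n, m) = 0 for m ≠ n, and for ℓ > n: B(ℓ, 0) = B(ℓ−1, 1) and B(ℓ, m) = d·B(ℓ−1, m−1) + B(ℓ−1, m+1) for m ≥ 1. Then Σ_{m ≥ 0} B(ℓ, m) = d^n · Σ_{i=0}^{⌊(t+n)/2⌋} ( C(t, i) − C(t, i − n − 1) ) · d^{t−i}. -/

import Mathlib

/-- Closed form (reflection principle): value of `B (n+t) m`. -/
def Eaux (d n t m : ℕ) : ℤ :=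
  if (m + t + n) % 2 = 0 ∧ n ≤ m + t then
    (d : ℤ) ^ n * (d : ℤ) ^ ((m + t - n) / 2) *
      ((Nat.choose t ((m + t - n) / 2) : ℤ) -
        (Nat.choose t ((m + t - n) / 2 + n + 1) : ℤ))
  else 0

lemma Eaux_vanish (d n t m : ℕ) (h : n + t < m) : Eaux d n t m = 0 := by
  unfold Eaux
  split_ifs with hc
  · rw [Nat.choose_eq_zero_of_lt (show t < (m + t - n) / 2 by omega),
      Nat.choose_eq_zero_of_lt (show t < (m + t - n) / 2 + n + 1 by omega)]
    simp
  · rfl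

lemma Eaux_base (d n m : ℕ) : Eaux d n 0 m = if m = n then ((d : ℤ) ^ n) else 0 := by
  unfold Eaux
  rcases eq_or_ne m n with rfl | hmn
  · rw [if_pos (by omega), if_pos rfl]
    rw [show (m + 0 - m) / 2 = 0 by omega]
    rw [Nat.choose_eq_zero_of_lt (show 0 < 0 + m + 1 by omega)]
    simp
  · rw [if_neg hmn]
    split_ifs with hc
    · rw [Nat.choose_eq_zero_of_lt (show 0 < (m + 0 - n) / 2 by omega),
        Nat.choose_eq_zero_of_lt (show 0 < (m + 0 - n) / 2 + n + 1 by omega)]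
      simp
    · rfl

lemma Eaux_step0 (d n t : ℕ) : Eaux d n (t + 1) 0 = Eaux d n t 1 := by
  unfold Eaux
  by_cases hc : (1 + t + n) % 2 = 0 ∧ n ≤ 1 + t
  · rw [if_pos (show (0 + (t + 1) + n) % 2 = 0 ∧ n ≤ 0 + (t + 1) by omega), if_pos hc]
    rw [show (0 + (t + 1) - n) / 2 = (1 + t - n) / 2 by omega]
    set u := (1 + t - n) / 2 with hu
    have hnu : n + 2 * u = t + 1 := by omega
    match u, hnu with
    | 0, hnu =>
      rw [Nat.choose_eq_zero_of_lt (show t + 1 < 0 + n + 1 by omega),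
        Nat.choose_eq_zero_of_lt (show t < 0 + n + 1 by omega)]
      simp
    | v + 1, hnu =>
      rw [Nat.choose_succ_succ t v,
        show v + 1 + n + 1 = (v + 1 + n) + 1 by ring,
        Nat.choose_succ_succ t (v + 1 + n)]
      have hsymm : t.choose v = t.choose (v + 1 + n) := by
        have h1 := Nat.choose_symm (show v + 1 + n ≤ t by omega) (n := t)
        rw [show t - (v + 1 + n) = v by omega] at h1
        exact h1
      push_cast
      rw [show ((t.choose v : ℤ)) = (t.choose (v + 1 + n) : ℤ) from by exact_mod_cast hsymm]
      ring
  · rw [if_neg (show ¬((0 + (t + 1) + n) % 2 = 0 ∧ n ≤ 0 + (t + 1)) by omega), if_neg hc]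

lemma Eaux_step (d n t k : ℕ) :
    Eaux d n (t + 1) (k + 1) = (d : ℤ) * Eaux d n t k + Eaux d n t (k + 2) := by
  unfold Eaux
  by_cases hp : (k + t + n) % 2 = 0
  · by_cases hA : n ≤ k + t
    · rw [if_pos (by omega), if_pos (by omega), if_pos (by omega)]
      set w := (k + t - n) / 2 with hw
      rw [show (k + 1 + (t + 1) - n) / 2 = w + 1 by omega,
        show (k + 2 + t - n) / 2 = w + 1 by omega]
      rw [Nat.choose_succ_succ t w,
        show w + 1 + n + 1 = (w + n + 1) + 1 by ring,
        Nat.choose_succ_succ t (w + n + 1)]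
      push_cast
      ring
    · by_cases hL : n ≤ k + t + 2
      · rw [if_pos (by omega), if_neg (by omega), if_pos (by omega)]
        rw [show (k + 1 + (t + 1) - n) / 2 = 0 by omega,
          show (k + 2 + t - n) / 2 = 0 by omega]
        rw [Nat.choose_eq_zero_of_lt (show t + 1 < 0 + n + 1 by omega),
          Nat.choose_eq_zero_of_lt (show t < 0 + n + 1 by omega)]
        simp
      · rw [if_neg (by omega), if_neg (by omega), if_neg (by omega)]
        ring
  · rw [if_neg (by omega), if_neg (by omega), if_neg (by omega)]
    ring

lemma Eaux_eval (d n t i : ℕ) (h2 : 2 * i ≤ n + t) :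
    Eaux d n t (n + t - 2 * i) =
      (d : ℤ) ^ n * (((Nat.choose t i : ℤ) -
        (if n + 1 ≤ i then (Nat.choose t (i - (n + 1)) : ℤ) else 0)) * (d : ℤ) ^ (t - i)) := by
  unfold Eaux
  by_cases hi : i ≤ t
  · rw [if_pos (by omega)]
    rw [show (n + t - 2 * i + t - n) / 2 = t - i by omega]
    rw [Nat.choose_symm hi]
    by_cases hni : n + 1 ≤ i
    · rw [if_pos hni, show t - i + n + 1 = t - (i - (n + 1)) by omega,
        Nat.choose_symm (show i - (n + 1) ≤ t by omega)]
      ring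
    · rw [if_neg hni, Nat.choose_eq_zero_of_lt (show t < t - i + n + 1 by omega)]
      push_cast
      ring
  · rw [if_neg (by omega), if_neg (show ¬(n + 1 ≤ i) by omega),
      Nat.choose_eq_zero_of_lt (show t < i by omega)]
    push_cast
    ring

/-- cardinality of `NC(ℓ)_n` (non-crossing partial matchings of `ℓ`
points over a `d`-letter alphabet with no pair among the first `n` points). -/
theorem stmt5 (d n : ℕ) (hd : 1 ≤ d) (B : ℕ → ℕ → ℕ)
    (hBnn : B n n = d ^ n)
    (hBn : ∀ m, m ≠ n → B n m = 0)
    (hB0 : ∀ l, n < l → B l 0 = B (l - 1) 1)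
    (hBm : ∀ l m, n < l → 1 ≤ m → B l m = d * B (l - 1) (m - 1) + B (l - 1) (m + 1))
    (l : ℕ) (hl : n ≤ l) :
    (∀ m, l < m → B l m = 0) ∧
    (∑ m ∈ Finset.range (l + 1), (B l m : ℤ)) =
      (d : ℤ) ^ n * ∑ i ∈ Finset.range (((l - n) + n) / 2 + 1),
        ((Nat.choose (l - n) i : ℤ) -
            (if n + 1 ≤ i then (Nat.choose (l - n) (i - (n + 1)) : ℤ) else 0))
          * (d : ℤ) ^ (l - n - i) := by
  have key : ∀ t m, (B (n + t) m : ℤ) = Eaux d n t m := by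
    intro t
    induction t with
    | zero =>
      intro m
      rw [Eaux_base]
      rcases eq_or_ne m n with rfl | h
      · rw [if_pos rfl, show m + 0 = m from rfl, hBnn]
        push_cast
        ring
      · rw [if_neg h, show n + 0 = n from rfl, hBn m h]
        rfl
    | succ t ih =>
      intro m
      match m with
      | 0 =>
        rw [hB0 (n + (t + 1)) (by omega), show n + (t + 1) - 1 = n + t by omega,
          ih 1, Eaux_step0]
      | m + 1 =>
        rw [hBm (n + (t + 1)) (m + 1) (by omega) (by omega),
          show n + (t + 1) - 1 = n + t by omega, show m + 1 - 1 = m from rfl]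
        push_cast
        rw [ih m, ih (m + 2), Eaux_step]
  obtain ⟨t, rfl⟩ : ∃ t, l = n + t := ⟨l - n, by omega⟩
  have hvanish : ∀ m, n + t < m → B (n + t) m = 0 := by
    intro m hm
    have h1 := key t m
    rw [Eaux_vanish d n t m hm] at h1
    exact_mod_cast h1
  refine ⟨hvanish, ?_⟩
  rw [show n + t - n = t by omega]
  have hsum1 : ∑ m ∈ Finset.range (n + t + 1), (B (n + t) m : ℤ)
      = ∑ m ∈ Finset.range (n + t + 1), Eaux d n t m :=
    Finset.sum_congr rfl fun m _ => key t m
  rw [hsum1]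
  have hinj : ∀ x ∈ Finset.range ((t + n) / 2 + 1), ∀ y ∈ Finset.range ((t + n) / 2 + 1),
      n + t - 2 * x = n + t - 2 * y → x = y := by
    intro x hx y hy hxy
    simp only [Finset.mem_range] at hx hy
    omega
  have himg : ∑ i ∈ Finset.range ((t + n) / 2 + 1), Eaux d n t (n + t - 2 * i)
      = ∑ m ∈ (Finset.range ((t + n) / 2 + 1)).image (fun i => n + t - 2 * i),
          Eaux d n t m := (Finset.sum_image hinj).symm
  have hsub : ∑ m ∈ (Finset.range ((t + n) / 2 + 1)).image (fun i => n + t - 2 * i),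
      Eaux d n t m = ∑ m ∈ Finset.range (n + t + 1), Eaux d n t m := by
    apply Finset.sum_subset
    · intro x hx
      simp only [Finset.mem_image, Finset.mem_range] at hx
      obtain ⟨i, hi, rfl⟩ := hx
      simp only [Finset.mem_range]
      omega
    · intro x hx hnx
      simp only [Finset.mem_range] at hx
      simp only [Finset.mem_image, Finset.mem_range, not_exists] at hnx
      unfold Eaux
      rw [if_neg]
      intro hc
      exact hnx ((n + t - x) / 2) ⟨by omega, by omega⟩
  rw [← hsub, ← himg]
  rw [Finset.mul_sum]
  apply Finset.sum_congr rfl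
  intro i hi
  simp only [Finset.mem_range] at hi
  rw [Eaux_eval d n t i (by omega)]
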